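/- Let σ_n → σ* a.e. in Ω with λ ≤ σ_n, σ* ≤ λ^{-1} a.e., u_n ⇀ u weakly in H^1(Ω), and suppose (σ_n ∇u_n, ∇u_n)_{L²(Ω)} → (σ* ∇u, ∇u)_{L²(Ω)}. Then ‖∇(u_n − u)‖_{L²(Ω)} → 0, i.e., ∇u_n → ∇u strongly in L²(Ω). -/

import Mathlib

open MeasureTheory Filter
open scoped RealInnerProductSpace

noncomputable section

abbrev Euc (d : ℕ) := EuclideanSpace ℝ (Fin d)

/-- Weak convergence in `H¹(Ω)` (tested against all `w ∈ H¹(Ω)` via the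
`H¹` inner product), together with the uniform `H¹` bound it entails. -/
def WeakH1Tendsto {d : ℕ} (μ : Measure (Euc d)) (un : ℕ → Euc d → ℝ) (u : Euc d → ℝ) : Prop :=
  (∃ C : ℝ, ∀ n, (∫ x, (un n x) ^ 2 ∂μ) + (∫ x, ‖gradient (un n) x‖ ^ 2 ∂μ) ≤ C) ∧
  ∀ w : Euc d → ℝ, MemLp w 2 μ → MemLp (fun x => gradient w x) 2 μ →
    Tendsto (fun n => ∫ x, (un n x * w x + ⟪gradient (un n) x, gradient w x⟫) ∂μ) atTop
      (nhds (∫ x, (u x * w x + ⟪gradient u x, gradient w x⟫) ∂μ))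

section Aux

variable {α : Type*} {m : MeasurableSpace α} {μ : Measure α}
  {E : Type*} [NormedAddCommGroup E] [InnerProductSpace ℝ E]

lemma integrable_inner_of_memLp {f g : α → E} (hf : MemLp f 2 μ) (hg : MemLp g 2 μ) :
    Integrable (fun x => ⟪f x, g x⟫) μ := by
  have h := MeasureTheory.L2.integrable_inner (𝕜 := ℝ) (hf.toLp f) (hg.toLp g)
  refine h.congr ?_
  filter_upwards [hf.coeFn_toLp, hg.coeFn_toLp] with x h1 h2
  rw [h1, h2]

lemma inner_toLp_eq {f g : α → E} (hf : MemLp f 2 μ) (hg : MemLp g 2 μ) :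
    ⟪hf.toLp f, hg.toLp g⟫ = ∫ x, ⟪f x, g x⟫ ∂μ := by
  rw [MeasureTheory.L2.inner_def]
  refine integral_congr_ae ?_
  filter_upwards [hf.coeFn_toLp, hg.coeFn_toLp] with x h1 h2
  rw [h1, h2]

lemma weak_of_dense {H : Type*} [NormedAddCommGroup H] [InnerProductSpace ℝ H] [CompleteSpace H]
    (S : Set H) (f : ℕ → H) (g : H) (M : ℝ)
    (hfS : ∀ n, f n ∈ S) (hgS : g ∈ S)
    (hM : ∀ n, ‖f n‖ ≤ M)
    (hconv : ∀ s ∈ S, Tendsto (fun n => ⟪f n, s⟫) atTop (nhds ⟪g, s⟫)) (h : H) :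
    Tendsto (fun n => ⟪f n, h⟫) atTop (nhds ⟪g, h⟫) := by
  set V : Submodule ℝ H := (Submodule.span ℝ S).topologicalClosure with hVdef
  haveI : CompleteSpace V := (Submodule.isClosed_topologicalClosure _).completeSpace_coe
  have hspan : ∀ s ∈ Submodule.span ℝ S, Tendsto (fun n => ⟪f n, s⟫) atTop (nhds ⟪g, s⟫) := by
    intro s hs
    induction hs using Submodule.span_induction with
    | mem x hx => exact hconv x hx
    | zero => simpa using tendsto_const_nhds
    | add x y _ _ hx hy => simpa [inner_add_right] using hx.add hy
    | smul a x _ hx => simpa [inner_smul_right] using hx.const_mul a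
  have hMg : ∀ n, ‖f n‖ ≤ max M ‖g‖ := fun n => le_trans (hM n) (le_max_left _ _)
  have hg' : ‖g‖ ≤ max M ‖g‖ := le_max_right _ _
  set M' : ℝ := max M ‖g‖ + 1 with hM'def
  have hM'pos : 0 < M' := by positivity
  have hMg' : ∀ n, ‖f n‖ ≤ M' := fun n => (hMg n).trans (by linarith)
  have hgM' : ‖g‖ ≤ M' := hg'.trans (by linarith)
  have hV : ∀ v ∈ V, Tendsto (fun n => ⟪f n, v⟫) atTop (nhds ⟪g, v⟫) := by
    intro v hv
    rw [Metric.tendsto_atTop]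
    intro ε hε
    have hv' : v ∈ closure (Submodule.span ℝ S : Set H) := hv
    obtain ⟨s, hsS, hds⟩ := Metric.mem_closure_iff.1 hv' (ε / 3 / M') (by positivity)
    obtain ⟨N, hN⟩ := (Metric.tendsto_atTop.1 (hspan s hsS)) (ε / 3) (by positivity)
    refine ⟨N, fun n hn => ?_⟩
    have h1 : |⟪f n, v - s⟫| ≤ M' * ‖v - s‖ := by
      calc |⟪f n, v - s⟫| ≤ ‖f n‖ * ‖v - s‖ := abs_real_inner_le_norm _ _
        _ ≤ M' * ‖v - s‖ := by
            have := norm_nonneg (v - s)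
            nlinarith [hMg' n]
    have h3 : |⟪g, v - s⟫| ≤ M' * ‖v - s‖ := by
      calc |⟪g, v - s⟫| ≤ ‖g‖ * ‖v - s‖ := abs_real_inner_le_norm _ _
        _ ≤ M' * ‖v - s‖ := by
            have := norm_nonneg (v - s)
            nlinarith
    have hvs : ‖v - s‖ < ε / 3 / M' := by
      rw [← dist_eq_norm]; exact hds
    have hvsM : M' * ‖v - s‖ < ε / 3 := by
      rw [lt_div_iff₀ hM'pos] at hvs
      linarith [mul_comm M' ‖v - s‖]
    have h2 := hN n hn
    rw [Real.dist_eq] at h2 ⊢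
    have e1 : ⟪f n, v⟫ - ⟪g, v⟫ =
        ⟪f n, v - s⟫ + (⟪f n, s⟫ - ⟪g, s⟫) - ⟪g, v - s⟫ := by
      simp only [inner_sub_right]; ring
    rw [e1]
    have habs : |⟪f n, v - s⟫ + (⟪f n, s⟫ - ⟪g, s⟫) - ⟪g, v - s⟫|
        ≤ |⟪f n, v - s⟫| + |⟪f n, s⟫ - ⟪g, s⟫| + |⟪g, v - s⟫| := by
      calc |⟪f n, v - s⟫ + (⟪f n, s⟫ - ⟪g, s⟫) - ⟪g, v - s⟫|
          ≤ |⟪f n, v - s⟫ + (⟪f n, s⟫ - ⟪g, s⟫)| + |⟪g, v - s⟫| := abs_sub _ _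
        _ ≤ |⟪f n, v - s⟫| + |⟪f n, s⟫ - ⟪g, s⟫| + |⟪g, v - s⟫| := by
            gcongr
            exact abs_add_le _ _
    refine lt_of_le_of_lt habs ?_
    have hA : |⟪f n, v - s⟫| < ε / 3 := h1.trans_lt hvsM
    have hC : |⟪g, v - s⟫| < ε / 3 := h3.trans_lt hvsM
    linarith [hA, hC, h2]
  have hfV : ∀ n, f n ∈ V :=
    fun n => Submodule.le_topologicalClosure _ (Submodule.subset_span (hfS n))
  have hgV : g ∈ V := Submodule.le_topologicalClosure _ (Submodule.subset_span hgS)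
  have hperp : h - (V.orthogonalProjectionOnto h : H) ∈ Vᗮ :=
    V.sub_starProjection_mem_orthogonal h
  have key : ∀ v ∈ V, ⟪v, h⟫ = ⟪v, (V.orthogonalProjectionOnto h : H)⟫ := by
    intro v hv
    have := (Submodule.mem_orthogonal V _).1 hperp v hv
    rw [inner_sub_right] at this
    linarith
  have e2 : (fun n => ⟪f n, h⟫) = fun n => ⟪f n, (V.orthogonalProjectionOnto h : H)⟫ := by
    funext n; exact key _ (hfV n)
  rw [e2, key g hgV]
  exact hV _ (V.orthogonalProjectionOnto h).2

end Aux

set_option maxHeartbeats 2000000 in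
/-- If `σₙ → σ*` a.e. with `λ ≤ σₙ, σ* ≤ λ⁻¹` a.e.,
`uₙ ⇀ u` weakly in `H¹(Ω)` and `(σₙ∇uₙ, ∇uₙ) → (σ*∇u, ∇u)`, then
`∇uₙ → ∇u` strongly in `L²(Ω)`. -/
theorem weak_plus_energy_implies_strong_gradient
    {d : ℕ}
    (Ω : Set (Euc d)) (hΩo : IsOpen Ω) (hΩb : Bornology.IsBounded Ω)
    (μ : Measure (Euc d)) (hμ : μ = volume.restrict Ω)
    (lam : ℝ) (hlam : lam ∈ Set.Ioo (0:ℝ) 1)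
    (σn : ℕ → Euc d → ℝ) (σs : Euc d → ℝ)
    (hmeas : ∀ n, AEStronglyMeasurable (σn n) μ) (hmeasσ : AEStronglyMeasurable σs μ)
    (hbdn : ∀ n, ∀ᵐ x ∂μ, lam ≤ σn n x ∧ σn n x ≤ lam⁻¹)
    (hbds : ∀ᵐ x ∂μ, lam ≤ σs x ∧ σs x ≤ lam⁻¹)
    (hae : ∀ᵐ x ∂μ, Tendsto (fun n => σn n x) atTop (nhds (σs x)))
    (un : ℕ → Euc d → ℝ) (u : Euc d → ℝ)
    (hun : ∀ n, MemLp (un n) 2 μ ∧ MemLp (fun x => gradient (un n) x) 2 μ)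
    (hu : MemLp u 2 μ ∧ MemLp (fun x => gradient u x) 2 μ)
    (hweak : WeakH1Tendsto μ un u)
    (henergy : Tendsto (fun n => ∫ x, σn n x * ⟪gradient (un n) x, gradient (un n) x⟫ ∂μ)
      atTop (nhds (∫ x, σs x * ⟪gradient u x, gradient u x⟫ ∂μ))) :
    Tendsto (fun n => ∫ x, ‖gradient (un n) x - gradient u x‖ ^ 2 ∂μ) atTop (nhds 0) := by
  obtain ⟨hlam0, hlam1⟩ := hlam
  have hlaminv : (0:ℝ) < lam⁻¹ := by positivity
  have hG : MemLp (fun x => gradient u x) 2 μ := hu.2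
  have hgn : ∀ n, MemLp (fun x => gradient (un n) x) 2 μ := fun n => (hun n).2
  -- a.e. bounds on |σ|
  have hσnb : ∀ n, ∀ᵐ x ∂μ, ‖σn n x‖ ≤ lam⁻¹ := by
    intro n
    filter_upwards [hbdn n] with x hx
    rw [Real.norm_eq_abs, abs_le]
    constructor <;> nlinarith [hx.1, hx.2]
  have hσsb : ∀ᵐ x ∂μ, ‖σs x‖ ≤ lam⁻¹ := by
    filter_upwards [hbds] with x hx
    rw [Real.norm_eq_abs, abs_le]
    constructor <;> nlinarith [hx.1, hx.2]
  -- MemLp of the auxiliary vector fields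
  have hmemd : ∀ n, MemLp (fun x => (σn n x - σs x) • gradient u x) 2 μ := by
    intro n
    refine MemLp.of_le_mul (c := 2 * lam⁻¹) hG
      (((hmeas n).sub hmeasσ).smul hG.aestronglyMeasurable) ?_
    filter_upwards [hσnb n, hσsb] with x h1 h2
    rw [norm_smul]
    have : ‖σn n x - σs x‖ ≤ 2 * lam⁻¹ := by
      calc ‖σn n x - σs x‖ ≤ ‖σn n x‖ + ‖σs x‖ := norm_sub_le _ _
        _ ≤ 2 * lam⁻¹ := by linarith
    exact mul_le_mul_of_nonneg_right this (norm_nonneg _)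
  have hmemσ : MemLp (fun x => σs x • gradient u x) 2 μ := by
    refine MemLp.of_le_mul (c := lam⁻¹) hG (hmeasσ.smul hG.aestronglyMeasurable) ?_
    filter_upwards [hσsb] with x h2
    rw [norm_smul]
    exact mul_le_mul_of_nonneg_right h2 (norm_nonneg _)
  -- integrability facts
  have iGG : Integrable (fun x => ⟪gradient u x, gradient u x⟫) μ :=
    integrable_inner_of_memLp hG hG
  have iInn : ∀ n, Integrable (fun x => ⟪gradient (un n) x, gradient (un n) x⟫) μ :=
    fun n => integrable_inner_of_memLp (hgn n) (hgn n)
  have iA : ∀ n, Integrable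
      (fun x => σn n x * ⟪gradient (un n) x, gradient (un n) x⟫) μ :=
    fun n => (iInn n).bdd_mul (hmeas n) (hσnb n)
  have iB : ∀ n, Integrable
      (fun x => ⟪gradient (un n) x, (σn n x - σs x) • gradient u x⟫) μ :=
    fun n => integrable_inner_of_memLp (hgn n) (hmemd n)
  have iC : ∀ n, Integrable
      (fun x => ⟪gradient (un n) x, σs x • gradient u x⟫) μ :=
    fun n => integrable_inner_of_memLp (hgn n) hmemσ
  have iD : ∀ n, Integrable (fun x => σn n x * ⟪gradient u x, gradient u x⟫) μ :=
    fun n => iGG.bdd_mul (hmeas n) (hσnb n)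
  have hsubmem : ∀ n, MemLp (fun x => gradient (un n) x - gradient u x) 2 μ :=
    fun n => (hgn n).sub hG
  have iSub : ∀ n, Integrable (fun x => ‖gradient (un n) x - gradient u x‖ ^ 2) μ := by
    intro n
    have h := integrable_inner_of_memLp (hsubmem n) (hsubmem n)
    refine h.congr (Eventually.of_forall fun x => ?_)
    exact real_inner_self_eq_norm_sq _
  have iJ : ∀ n, Integrable (fun x => σn n x * ‖gradient (un n) x - gradient u x‖ ^ 2) μ :=
    fun n => (iSub n).bdd_mul (hmeas n) (hσnb n)
  -- the abbreviations
  set A : ℕ → ℝ := fun n => ∫ x, σn n x * ⟪gradient (un n) x, gradient (un n) x⟫ ∂μ with hA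
  set B : ℕ → ℝ := fun n =>
    ∫ x, ⟪gradient (un n) x, (σn n x - σs x) • gradient u x⟫ ∂μ with hBdef
  set Cs : ℕ → ℝ := fun n => ∫ x, ⟪gradient (un n) x, σs x • gradient u x⟫ ∂μ with hCdef
  set D : ℕ → ℝ := fun n => ∫ x, σn n x * ⟪gradient u x, gradient u x⟫ ∂μ with hDdef
  set L : ℝ := ∫ x, σs x * ⟪gradient u x, gradient u x⟫ ∂μ with hLdef
  -- key splitting identity
  have key : ∀ n, ∫ x, σn n x * ‖gradient (un n) x - gradient u x‖ ^ 2 ∂μ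
      = A n - 2 * B n - 2 * Cs n + D n := by
    intro n
    have hpt : ∀ x, σn n x * ‖gradient (un n) x - gradient u x‖ ^ 2 =
        σn n x * ⟪gradient (un n) x, gradient (un n) x⟫
        - 2 * ⟪gradient (un n) x, (σn n x - σs x) • gradient u x⟫
        - 2 * ⟪gradient (un n) x, σs x • gradient u x⟫
        + σn n x * ⟪gradient u x, gradient u x⟫ := by
      intro x
      rw [real_inner_smul_right, real_inner_smul_right]
      have hn2 : ‖gradient (un n) x - gradient u x‖ ^ 2 =
          ⟪gradient (un n) x, gradient (un n) x⟫
          - 2 * ⟪gradient (un n) x, gradient u x⟫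
          + ⟪gradient u x, gradient u x⟫ := by
        rw [← real_inner_self_eq_norm_sq]
        exact real_inner_sub_sub_self _ _
      rw [hn2]; ring
    calc ∫ x, σn n x * ‖gradient (un n) x - gradient u x‖ ^ 2 ∂μ
        = ∫ x, (σn n x * ⟪gradient (un n) x, gradient (un n) x⟫
            - 2 * ⟪gradient (un n) x, (σn n x - σs x) • gradient u x⟫
            - 2 * ⟪gradient (un n) x, σs x • gradient u x⟫
            + σn n x * ⟪gradient u x, gradient u x⟫) ∂μ :=
          integral_congr_ae (Eventually.of_forall hpt)
      _ = A n - 2 * B n - 2 * Cs n + D n := by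
          have i1 : Integrable (fun x => σn n x * ⟪gradient (un n) x, gradient (un n) x⟫
              - 2 * ⟪gradient (un n) x, (σn n x - σs x) • gradient u x⟫) μ :=
            ((iA n).sub ((iB n).const_mul 2)).congr (Eventually.of_forall fun x => rfl)
          have i2 : Integrable (fun x => σn n x * ⟪gradient (un n) x, gradient (un n) x⟫
              - 2 * ⟪gradient (un n) x, (σn n x - σs x) • gradient u x⟫
              - 2 * ⟪gradient (un n) x, σs x • gradient u x⟫) μ :=
            (i1.sub ((iC n).const_mul 2)).congr (Eventually.of_forall fun x => rfl)
          rw [integral_add i2 (iD n), integral_sub i1 ((iC n).const_mul 2),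
            integral_sub (iA n) ((iB n).const_mul 2),
            integral_const_mul, integral_const_mul]
  -- D n → L by dominated convergence
  have hD : Tendsto D atTop (nhds L) := by
    refine tendsto_integral_of_dominated_convergence
      (fun x => lam⁻¹ * ⟪gradient u x, gradient u x⟫)
      (fun n => (hmeas n).mul (hG.aestronglyMeasurable.inner hG.aestronglyMeasurable))
      (iGG.const_mul lam⁻¹) (fun n => ?_) ?_
    · filter_upwards [hσnb n] with x hx
      have hGG0 : 0 ≤ ⟪gradient u x, gradient u x⟫ := real_inner_self_nonneg
      rw [Real.norm_eq_abs, abs_mul, abs_of_nonneg hGG0]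
      exact mul_le_mul_of_nonneg_right (by rwa [Real.norm_eq_abs] at hx) hGG0
    · filter_upwards [hae] with x hx
      exact hx.mul_const _
  -- ‖Hn‖ → 0
  have hHsq : Tendsto (fun n => ∫ x, ‖(σn n x - σs x) • gradient u x‖ ^ 2 ∂μ) atTop
      (nhds 0) := by
    have iBound : Integrable (fun x => (2 * lam⁻¹) ^ 2 * ‖gradient u x‖ ^ 2) μ := by
      refine (iGG.const_mul ((2 * lam⁻¹) ^ 2)).congr (Eventually.of_forall fun x => ?_)
      simp only []
      rw [real_inner_self_eq_norm_sq]
    have h0 : (0:ℝ) = ∫ x, (0:ℝ) ∂μ := by simp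
    rw [h0]
    refine tendsto_integral_of_dominated_convergence
      (fun x => (2 * lam⁻¹) ^ 2 * ‖gradient u x‖ ^ 2)
      (fun n => ?_) iBound (fun n => ?_) ?_
    · exact ((((hmeas n).sub hmeasσ).smul hG.aestronglyMeasurable).norm.pow 2)
    · filter_upwards [hσnb n, hσsb] with x h1 h2
      have hd : ‖σn n x - σs x‖ ≤ 2 * lam⁻¹ := by
        calc ‖σn n x - σs x‖ ≤ ‖σn n x‖ + ‖σs x‖ := norm_sub_le _ _
          _ ≤ 2 * lam⁻¹ := by linarith
      rw [Real.norm_eq_abs, abs_of_nonneg (by positivity), norm_smul, mul_pow]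
      have h2' : (0:ℝ) ≤ ‖gradient u x‖ ^ 2 := by positivity
      have : ‖σn n x - σs x‖ ^ 2 ≤ (2 * lam⁻¹) ^ 2 := by
        have h0 : (0:ℝ) ≤ ‖σn n x - σs x‖ := norm_nonneg _
        nlinarith
      exact mul_le_mul_of_nonneg_right this h2'
    · filter_upwards [hae] with x hx
      have : Tendsto (fun n => σn n x - σs x) atTop (nhds 0) := by
        simpa using hx.sub_const (σs x)
      have h1 : Tendsto (fun n => ‖(σn n x - σs x) • gradient u x‖ ^ 2) atTop
          (nhds (‖(0:ℝ) • gradient u x‖ ^ 2)) := by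
        refine (Tendsto.norm ?_).pow 2
        exact (this.smul_const _)
      simpa using h1
  -- B n → 0
  obtain ⟨C, hC⟩ := hweak.1
  have hun2nonneg : ∀ n, (0:ℝ) ≤ ∫ x, (un n x) ^ 2 ∂μ :=
    fun n => integral_nonneg fun x => sq_nonneg _
  have hgnC : ∀ n, ∫ x, ‖gradient (un n) x‖ ^ 2 ∂μ ≤ C :=
    fun n => by linarith [hC n, hun2nonneg n]
  have hB0 : Tendsto B atTop (nhds 0) := by
    set Gn : (n : ℕ) → Lp (Euc d) 2 μ := fun n => (hgn n).toLp _ with hGn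
    set Hn : (n : ℕ) → Lp (Euc d) 2 μ := fun n => (hmemd n).toLp _ with hHn
    have hGnormsq : ∀ n, ‖Gn n‖ ^ 2 = ∫ x, ‖gradient (un n) x‖ ^ 2 ∂μ := by
      intro n
      rw [← real_inner_self_eq_norm_sq, inner_toLp_eq]
      exact integral_congr_ae (Eventually.of_forall fun x => real_inner_self_eq_norm_sq _)
    have hGnorm : ∀ n, ‖Gn n‖ ≤ Real.sqrt C := by
      intro n
      have hC0 : (0:ℝ) ≤ C := le_trans (by positivity : (0:ℝ) ≤ ‖Gn n‖ ^ 2)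
        (by rw [hGnormsq n]; exact hgnC n)
      refine (Real.le_sqrt (norm_nonneg _) hC0).2 ?_
      rw [hGnormsq n]; exact hgnC n
    have hHnormsq : ∀ n, ‖Hn n‖ ^ 2 = ∫ x, ‖(σn n x - σs x) • gradient u x‖ ^ 2 ∂μ := by
      intro n
      rw [← real_inner_self_eq_norm_sq, inner_toLp_eq]
      exact integral_congr_ae (Eventually.of_forall fun x => real_inner_self_eq_norm_sq _)
    have hHnorm : Tendsto (fun n => ‖Hn n‖) atTop (nhds 0) := by
      have h1 : Tendsto (fun n => ‖Hn n‖ ^ 2) atTop (nhds 0) := by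
        have := hHsq
        refine this.congr fun n => ?_
        rw [hHnormsq n]
      have h2 := h1.sqrt
      rw [Real.sqrt_zero] at h2
      refine h2.congr fun n => ?_
      exact Real.sqrt_sq (norm_nonneg _)
    refine squeeze_zero_norm (fun n => ?_) (by simpa using hHnorm.const_mul (Real.sqrt C))
    have hBinner : B n = ⟪Gn n, Hn n⟫ := by
      rw [hBdef, inner_toLp_eq]
    rw [hBinner, Real.norm_eq_abs]
    calc |⟪Gn n, Hn n⟫| ≤ ‖Gn n‖ * ‖Hn n‖ := abs_real_inner_le_norm _ _
      _ ≤ Real.sqrt C * ‖Hn n‖ := mul_le_mul_of_nonneg_right (hGnorm n) (norm_nonneg _)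
  -- Cs n → L via weak convergence
  have hCs : Tendsto Cs atTop (nhds L) := by
    classical
    set HS : Type _ := WithLp 2 ((Lp ℝ 2 μ) × (Lp (Euc d) 2 μ)) with hHS
    let toE : (Lp ℝ 2 μ) × (Lp (Euc d) 2 μ) → HS := (WithLp.equiv 2 _).symm
    set S : Set HS := {p | ∃ w : Euc d → ℝ, ∃ hw1 : MemLp w 2 μ,
      ∃ hw2 : MemLp (fun x => gradient w x) 2 μ,
      p = toE (hw1.toLp w, hw2.toLp _)} with hSdef
    set f : ℕ → HS := fun n => toE ((hun n).1.toLp _, (hun n).2.toLp _) with hf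
    set g0 : HS := toE (hu.1.toLp u, hu.2.toLp _) with hg0
    have hfS : ∀ n, f n ∈ S := fun n => ⟨un n, (hun n).1, (hun n).2, rfl⟩
    have hgS : g0 ∈ S := ⟨u, hu.1, hu.2, rfl⟩
    -- inner products in HS
    have hinner : ∀ (a : (Lp ℝ 2 μ) × (Lp (Euc d) 2 μ)) (b : (Lp ℝ 2 μ) × (Lp (Euc d) 2 μ)),
        ⟪toE a, toE b⟫ = ⟪a.1, b.1⟫ + ⟪a.2, b.2⟫ := by
      intro a b
      rw [WithLp.prod_inner_apply]
      simp [toE]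
    -- inner with a test element of S
    have hinnerS : ∀ (v : Euc d → ℝ) (hv1 : MemLp v 2 μ)
        (hv2 : MemLp (fun x => gradient v x) 2 μ)
        (w : Euc d → ℝ) (hw1 : MemLp w 2 μ)
        (hw2 : MemLp (fun x => gradient w x) 2 μ),
        ⟪toE (hv1.toLp v, hv2.toLp _), toE (hw1.toLp w, hw2.toLp _)⟫
          = ∫ x, (v x * w x + ⟪gradient v x, gradient w x⟫) ∂μ := by
      intro v hv1 hv2 w hw1 hw2
      rw [hinner, inner_toLp_eq, inner_toLp_eq]
      have hi1 : Integrable (fun x => v x * w x) μ := by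
        have := integrable_inner_of_memLp (E := ℝ) hv1 hw1
        exact this.congr (Eventually.of_forall fun x => Real.inner_apply _ _)
      have hi2 := integrable_inner_of_memLp hv2 hw2
      have h1 : (∫ x, ⟪v x, w x⟫ ∂μ) = ∫ x, v x * w x ∂μ :=
        integral_congr_ae (Eventually.of_forall fun x => Real.inner_apply _ _)
      rw [h1, ← integral_add hi1 hi2]
    have hconv : ∀ s ∈ S, Tendsto (fun n => ⟪f n, s⟫) atTop (nhds ⟪g0, s⟫) := by
      rintro s ⟨w, hw1, hw2, rfl⟩
      have hc := hweak.2 w hw1 hw2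
      have e1 : (fun n => ⟪f n, toE (hw1.toLp w, hw2.toLp _)⟫) =
          fun n => ∫ x, (un n x * w x + ⟪gradient (un n) x, gradient w x⟫) ∂μ := by
        funext n
        exact hinnerS (un n) (hun n).1 (hun n).2 w hw1 hw2
      rw [e1, hinnerS u hu.1 hu.2 w hw1 hw2]
      exact hc
    have hM : ∀ n, ‖f n‖ ≤ Real.sqrt C := by
      intro n
      have hfn2 : ‖f n‖ ^ 2 = (∫ x, (un n x) ^ 2 ∂μ) + ∫ x, ‖gradient (un n) x‖ ^ 2 ∂μ := by
        rw [← real_inner_self_eq_norm_sq, hinner, inner_toLp_eq, inner_toLp_eq]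
        congr 1
        · exact integral_congr_ae (Eventually.of_forall fun x => by
            simp [RCLike.inner_apply, sq])
        · exact integral_congr_ae (Eventually.of_forall fun x => real_inner_self_eq_norm_sq _)
      have hle : ‖f n‖ ^ 2 ≤ C := by rw [hfn2]; exact hC n
      have hC0 : (0:ℝ) ≤ C := le_trans (by positivity) hle
      exact (Real.le_sqrt (norm_nonneg _) hC0).2 hle
    have hweakL2 := weak_of_dense S f g0 (Real.sqrt C) hfS hgS hM hconv
      (toE (0, hmemσ.toLp _))
    have e2 : (fun n => ⟪f n, toE (0, hmemσ.toLp _)⟫) = Cs := by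
      funext n
      rw [hinner, inner_toLp_eq]
      simp [hCdef]
    have e3 : ⟪g0, toE (0, hmemσ.toLp _)⟫ = L := by
      rw [hinner, inner_toLp_eq]
      simp only [inner_zero_right, zero_add]
      rw [hLdef]
      exact integral_congr_ae (Eventually.of_forall fun x => by
        exact real_inner_smul_right _ _ _)
    rw [e2, e3] at hweakL2
    exact hweakL2
  -- assemble: J n → 0
  have hJ : Tendsto (fun n => ∫ x, σn n x * ‖gradient (un n) x - gradient u x‖ ^ 2 ∂μ)
      atTop (nhds 0) := by
    have h1 : Tendsto (fun n => A n - 2 * B n - 2 * Cs n + D n) atTop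
        (nhds (L - 2 * 0 - 2 * L + L)) :=
      ((henergy.sub (hB0.const_mul 2)).sub (hCs.const_mul 2)).add hD
    rw [show L - 2 * 0 - 2 * L + L = 0 by ring] at h1
    exact h1.congr fun n => (key n).symm
  -- squeeze
  have hle : ∀ n, ∫ x, ‖gradient (un n) x - gradient u x‖ ^ 2 ∂μ
      ≤ lam⁻¹ * ∫ x, σn n x * ‖gradient (un n) x - gradient u x‖ ^ 2 ∂μ := by
    intro n
    have hmono : lam * ∫ x, ‖gradient (un n) x - gradient u x‖ ^ 2 ∂μ
        ≤ ∫ x, σn n x * ‖gradient (un n) x - gradient u x‖ ^ 2 ∂μ := by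
      rw [← integral_const_mul]
      refine integral_mono_ae ((iSub n).const_mul lam) (iJ n) ?_
      filter_upwards [hbdn n] with x hx
      exact mul_le_mul_of_nonneg_right hx.1 (by positivity)
    have := mul_le_mul_of_nonneg_left hmono (le_of_lt hlaminv)
    rwa [← mul_assoc, inv_mul_cancel₀ (ne_of_gt hlam0), one_mul] at this
  refine squeeze_zero (fun n => integral_nonneg fun x => by positivity) hle ?_
  simpa using hJ.const_mul lam⁻¹

end
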